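/- Let n be a natural number, Rhat in SO(3), E and deltaB real 3xn matrices with columns e^i and deltab^i, W = diag(w^1, ..., w^n) a real diagonal nxn matrix, and Ltilde any real 3x3 matrix. Then for xi in R^3, the equation hat(xi) * Ltilde * Rhat^T + Rhat * Ltilde^T * hat(xi) = Rhat * deltaB * W * E^T - E * W * deltaB^T * Rhat^T holds if and only if ( trace(Ltilde * Rhat^T) * I_3 - Ltilde * Rhat^T ) * xi = sum over i of w^i * hat(e^i) * Rhat * deltab^i. (Theorem 5: first-order relation between the attitude error of the Wahba-optimal attitude and the vector measurement errors, right-invariant error case.) -/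
import Mathlib

open Matrix

noncomputable section

def SO3 (R : Matrix (Fin 3) (Fin 3) ℝ) : Prop :=
  Rᵀ * R = 1 ∧ R.det = 1

def hat (w : Fin 3 → ℝ) : Matrix (Fin 3) (Fin 3) ℝ :=
  !![0, -w 2, w 1; w 2, 0, -w 0; -w 1, w 0, 0]

lemma hat_inj {a b : Fin 3 → ℝ} (h : hat a = hat b) : a = b := by
  funext k
  fin_cases k
  · have := congrFun (congrFun h 2) 1; simpa [hat] using this
  · have := congrFun (congrFun h 0) 2; simpa [hat] using this
  · have := congrFun (congrFun h 1) 0; simpa [hat] using this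

lemma hat_key (A : Matrix (Fin 3) (Fin 3) ℝ) (xi : Fin 3 → ℝ) :
    hat xi * A + Aᵀ * hat xi =
      hat ((Matrix.trace A • (1 : Matrix (Fin 3) (Fin 3) ℝ) - A).mulVec xi) := by
  ext i j
  fin_cases i <;> fin_cases j <;>
    simp [hat, Matrix.mul_apply, Matrix.mulVec, dotProduct, Matrix.trace,
      Matrix.diag, Fin.sum_univ_three, Matrix.one_apply, Matrix.sub_apply,
      Matrix.smul_apply, Matrix.transpose_apply, Matrix.vecMul, Matrix.vecHead,
      Matrix.vecTail] <;> ring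

set_option maxHeartbeats 1600000 in
lemma rhs_key (n : ℕ) (R : Matrix (Fin 3) (Fin 3) ℝ)
    (E deltaB : Matrix (Fin 3) (Fin n) ℝ) (w : Fin n → ℝ) :
    R * deltaB * Matrix.diagonal w * Eᵀ - E * Matrix.diagonal w * deltaBᵀ * Rᵀ =
      hat (∑ i : Fin n, w i •
        (hat fun l => E l i).mulVec (R.mulVec fun l => deltaB l i)) := by
  ext i j
  fin_cases i <;> fin_cases j <;>
    simp [hat, Matrix.mul_apply, Matrix.mulVec, dotProduct,
      Matrix.diagonal_apply, mul_ite, ite_mul, mul_zero, zero_mul,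
      Finset.sum_ite_eq, Finset.sum_ite_eq', Finset.sum_apply, Pi.smul_apply, Fin.sum_univ_three,
      Matrix.transpose_apply, Matrix.vecMul, Matrix.vecHead, Matrix.vecTail] <;>
    · rw [Finset.sum_mul, Finset.sum_mul, Finset.sum_mul,
        ← Finset.sum_add_distrib, ← Finset.sum_add_distrib, ← Finset.sum_sub_distrib]
      first
      | exact Finset.sum_eq_zero fun k _ => by ring
      | (rw [← Finset.sum_neg_distrib]; exact Finset.sum_congr rfl fun k _ => by ring)
      | exact Finset.sum_congr rfl fun k _ => by ring

theorem stmt9 (n : ℕ) (Rhat : Matrix (Fin 3) (Fin 3) ℝ) (hR : SO3 Rhat)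
    (E deltaB : Matrix (Fin 3) (Fin n) ℝ) (w : Fin n → ℝ)
    (W : Matrix (Fin n) (Fin n) ℝ) (hW : W = Matrix.diagonal w)
    (Ltilde : Matrix (Fin 3) (Fin 3) ℝ) (xi : Fin 3 → ℝ) :
    (hat xi * Ltilde * Rhatᵀ + Rhat * Ltildeᵀ * hat xi =
        Rhat * deltaB * W * Eᵀ - E * W * deltaBᵀ * Rhatᵀ) ↔
      (Matrix.trace (Ltilde * Rhatᵀ) • (1 : Matrix (Fin 3) (Fin 3) ℝ) -
          Ltilde * Rhatᵀ).mulVec xi =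
        ∑ i : Fin n, w i •
          (hat fun l => E l i).mulVec (Rhat.mulVec fun l => deltaB l i) := by
  subst hW
  have h1 : hat xi * Ltilde * Rhatᵀ + Rhat * Ltildeᵀ * hat xi =
      hat ((Matrix.trace (Ltilde * Rhatᵀ) • (1 : Matrix (Fin 3) (Fin 3) ℝ) -
        Ltilde * Rhatᵀ).mulVec xi) := by
    have : Rhat * Ltildeᵀ = (Ltilde * Rhatᵀ)ᵀ := by
      rw [Matrix.transpose_mul, Matrix.transpose_transpose]
    rw [Matrix.mul_assoc, this, hat_key]
  rw [h1, rhs_key]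
  exact ⟨hat_inj, fun h => by rw [h]⟩
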